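/- arXiv:2308.03013 — 2 statements merged into one kernel-verified Lean document; each statement's English description precedes it below -/
import Mathlib

section
/- Let (X, T, ν) be an ergodic probability measure-preserving system and A a measurable set with ν(A) > 1 − ε for some 0 < ε < 1/20. Then for ν-almost every x there exists an increasing sequence of positive integers n₀ < n₁ < n₂ < ⋯ such that T^{n_l}(x) ∈ A for all l ≥ 0 and n_{l+1} − n_l < ε·n_l for all l ≥ 0. -/
open MeasureTheory

section KacAux
open Set Function ENNReal

variable {X : Type*} [MeasurableSpace X] {T : X → X} {ν : Measure X}

/-- no return to `A` at times `1..m` -/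
def retU (T : X → X) (A : Set X) (m : ℕ) : Set X :=
  ⋂ (j : ℕ) (_ : 1 ≤ j) (_ : j ≤ m), T^[j] ⁻¹' Aᶜ

lemma mem_retU {A : Set X} {m : ℕ} {x : X} :
    x ∈ retU T A m ↔ ∀ j, 1 ≤ j → j ≤ m → T^[j] x ∉ A := by
  simp [retU]

lemma retU_meas (hT : Measurable T) {A : Set X} (hA : MeasurableSet A) (m : ℕ) :
    MeasurableSet (retU T A m) :=
  MeasurableSet.iInter fun j => MeasurableSet.iInter fun _ => MeasurableSet.iInter fun _ =>
    (hT.iterate j) hA.compl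

lemma retU_antitone {A : Set X} : Antitone (retU T A) := by
  intro a b hab
  intro x hx
  rw [mem_retU] at hx ⊢
  exact fun j h1 h2 => hx j h1 (h2.trans hab)

lemma retU_zero {A : Set X} : retU T A 0 = univ := by
  ext x; simp [mem_retU]; omega

lemma preimage_retU {A : Set X} (m : ℕ) :
    T ⁻¹' (Aᶜ ∩ retU T A m) = retU T A (m + 1) := by
  ext x
  simp only [mem_preimage, mem_inter_iff, mem_retU, mem_compl_iff]
  constructor
  · rintro ⟨h0, h⟩ j h1 h2
    rcases Nat.exists_eq_add_of_le h1 with ⟨k, rfl⟩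
    rcases Nat.eq_zero_or_pos k with rfl | hk
    · simpa using h0
    · have := h k hk (by omega)
      rw [← Function.iterate_succ_apply] at this
      rwa [add_comm]
  · intro h
    refine ⟨by simpa using h 1 le_rfl (by omega), fun j h1 h2 => ?_⟩
    have := h (j + 1) (by omega) (by omega)
    rwa [Function.iterate_succ_apply] at this

lemma kac_partial (hT : MeasurePreserving T ν ν) [IsProbabilityMeasure ν]
    {A : Set X} (hA : MeasurableSet A) (M : ℕ) :
    ∑ m ∈ Finset.range M, ν (A ∩ retU T A m) + ν (retU T A M) = 1 := by
  induction M with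
  | zero => simp [retU_zero]
  | succ M ih =>
    rw [Finset.sum_range_succ, add_assoc]
    rw [← ih]
    congr 1
    -- ν (A ∩ U M) + ν (U (M+1)) = ν (U M)
    have h1 : ν (retU T A (M + 1)) = ν (Aᶜ ∩ retU T A M) := by
      rw [← preimage_retU, hT.measure_preimage
        ((hA.compl.inter (retU_meas hT.measurable hA M)).nullMeasurableSet)]
    have h2 : A ∩ retU T A M ∪ Aᶜ ∩ retU T A M = retU T A M := by
      rw [← Set.union_inter_distrib_right]; simp
    rw [h1]; nth_rewrite 3 [← h2]
    exact (measure_union (disjoint_compl_right.mono inf_le_left inf_le_left)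
      (hA.compl.inter (retU_meas hT.measurable hA M))).symm

lemma kac_tsum (hT : MeasurePreserving T ν ν) [IsProbabilityMeasure ν]
    {A : Set X} (hA : MeasurableSet A) :
    ∑' m : ℕ, ν (A ∩ retU T A m) ≤ 1 := by
  refine Summable.tsum_le_of_sum_range_le ENNReal.summable fun M => ?_
  calc ∑ m ∈ Finset.range M, ν (A ∩ retU T A m)
      ≤ ∑ m ∈ Finset.range M, ν (A ∩ retU T A m) + ν (retU T A M) := le_self_add
    _ = 1 := kac_partial hT hA M

lemma returns_ae (hT : Ergodic T ν) [IsProbabilityMeasure ν]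
    {A : Set X} (hA : MeasurableSet A) (hA0 : ν A ≠ 0) :
    ∀ᵐ x ∂ν, ∀ m : ℕ, ∃ n, m ≤ n ∧ T^[n] x ∈ A := by
  set G : ℕ → Set X := fun m => ⋃ (n : ℕ) (_ : m ≤ n), T^[n] ⁻¹' A with hG
  have measG : ∀ m, MeasurableSet (G m) := fun m =>
    MeasurableSet.iUnion fun n => MeasurableSet.iUnion fun _ =>
      (hT.measurable.iterate n) hA
  have preG : ∀ m, T ⁻¹' G m = G (m + 1) := by
    intro m
    ext x
    simp only [hG, mem_preimage, mem_iUnion]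
    constructor
    · rintro ⟨n, hn, h⟩
      exact ⟨n + 1, by omega, by rwa [Function.iterate_succ_apply]⟩
    · rintro ⟨n, hn, h⟩
      rcases Nat.exists_eq_add_of_le hn with ⟨k, rfl⟩
      refine ⟨m + k, by omega, ?_⟩
      rw [← Function.iterate_succ_apply, show (m + k).succ = m + 1 + k by omega]
      exact h
  have measure_G : ∀ m, ν (G m) = ν (G 0) := by
    intro m
    induction m with
    | zero => rfl
    | succ m ih =>
      rw [← ih, ← preG,
        hT.toMeasurePreserving.measure_preimage (measG m).nullMeasurableSet]
  have hsub : T ⁻¹' G 1 ⊆ G 1 := by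
    rw [preG]
    intro x hx
    simp only [hG, mem_iUnion] at hx ⊢
    obtain ⟨n, hn, h⟩ := hx
    exact ⟨n, by omega, h⟩
  have hfull : ∀ m, ν (G m) = 1 := by
    have h1 : ν (G 1) = 1 := by
      rcases hT.ae_empty_or_univ_of_preimage_ae_le (measG 1).nullMeasurableSet
          hsub.eventuallyLE with h | h
      · exfalso
        apply hA0
        have : ν (G 1) = 0 := by rw [measure_congr h]; simp
        refine le_antisymm ?_ zero_le
        rw [← hT.toMeasurePreserving.measure_preimage hA.nullMeasurableSet, ← this]
        apply measure_mono
        intro x hx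
        simp only [hG, mem_iUnion]
        exact ⟨1, le_rfl, hx⟩
      · rw [measure_congr h]; simp
    intro m
    rw [measure_G m, ← measure_G 1, h1]
  rw [ae_all_iff]
  intro m
  have : ν (G m)ᶜ = 0 := by
    rw [Set.compl_eq_univ_diff, measure_diff (subset_univ _) (measG m).nullMeasurableSet
      (measure_ne_top _ _), hfull m, measure_univ, tsub_self]
  refine ae_iff.mpr (measure_mono_null ?_ this)
  intro x hx
  simp only [mem_setOf_eq, not_exists, not_and] at hx
  intro hxG
  simp only [hG, mem_iUnion] at hxG
  obtain ⟨n, hn, hmem⟩ := hxG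
  exact hx n hn hmem

end KacAux

section Main
open Set Function ENNReal

theorem stmt_3 {X : Type*} [MeasurableSpace X] {T : X → X} {ν : Measure X}
    [IsProbabilityMeasure ν] (hT : Ergodic T ν)
    {A : Set X} (hA : MeasurableSet A) {ε : ℝ} (hε : 0 < ε) (hε' : ε < 1/20)
    (hνA : 1 - ENNReal.ofReal ε < ν A) :
    ∀ᵐ x ∂ν, ∃ n : ℕ → ℕ, 0 < n 0 ∧ StrictMono n ∧
      (∀ l, T^[n l] x ∈ A) ∧ (∀ l, ((n (l+1) : ℝ) - n l) < ε * n l) := by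
  classical
  set K : ℕ := ⌈(3:ℝ)/ε⌉₊ with hKdef
  have hK1 : 1 ≤ K := Nat.one_le_ceil_iff.mpr (by positivity)
  have hKε : 3 ≤ ε * K := by
    have h1 : (3:ℝ)/ε ≤ K := Nat.le_ceil _
    calc (3:ℝ) = ε * (3/ε) := by field_simp
    _ ≤ ε * K := by apply mul_le_mul_of_nonneg_left h1 hε.le
  set g : ℕ → ℕ := fun n => ⌊ε * n⌋₊ - 1 with hgdef
  set B : ℕ → Set X := fun n => T^[n] ⁻¹' (A ∩ retU T A (g n)) with hBdef
  have measE : ∀ m, MeasurableSet (A ∩ retU T A m) := fun m =>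
    hA.inter (retU_meas hT.measurable hA m)
  have hBm : ∀ n, ν (B n) = ν (A ∩ retU T A (g n)) := fun n =>
    (hT.toMeasurePreserving.iterate n).measure_preimage (measE _).nullMeasurableSet
  have hgdiv : ∀ n, n / K ≤ g n := by
    intro n
    rcases lt_or_ge n K with h | h
    · simp [Nat.div_eq_of_lt h]
    · have hq1 : 1 ≤ n / K := (Nat.one_le_div_iff (by omega)).mpr h
      have hqK : n / K * K ≤ n := Nat.div_mul_le_self n K
      have hfl : n / K + 1 ≤ ⌊ε * n⌋₊ := by
        apply Nat.le_floor
        have hc : ((n / K * K : ℕ) : ℝ) ≤ (n : ℝ) := Nat.cast_le.mpr hqK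
        have h1 : (3:ℝ) * (n / K : ℕ) ≤ ε * n := by
          calc (3:ℝ) * (n / K : ℕ) ≤ (ε * K) * (n / K : ℕ) := by
                apply mul_le_mul_of_nonneg_right hKε (by positivity)
          _ = ε * ((n / K * K : ℕ) : ℝ) := by push_cast; ring
          _ ≤ ε * n := by apply mul_le_mul_of_nonneg_left hc hε.le
        have h2 : (1:ℝ) ≤ (n / K : ℕ) := by exact_mod_cast hq1
        push_cast
        linarith
      have hgn : g n = ⌊ε * (n:ℝ)⌋₊ - 1 := rfl
      omega
  have hBle : ∀ n, ν (B n) ≤ ν (A ∩ retU T A (n / K)) := by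
    intro n
    rw [hBm]
    exact measure_mono (Set.inter_subset_inter_right _ (retU_antitone (hgdiv n)))
  haveI : NeZero K := ⟨by omega⟩
  have hsum : ∑' n, ν (B n) ≠ ⊤ := by
    have hle : ∑' n, ν (B n) ≤ (K : ℝ≥0∞) * 1 := by
      calc ∑' n, ν (B n) ≤ ∑' n, ν (A ∩ retU T A (n / K)) := ENNReal.tsum_le_tsum hBle
      _ = ∑' (p : ℕ × Fin K), ν (A ∩ retU T A p.1) := by
          rw [← (Nat.divModEquiv K).tsum_eq (fun p : ℕ × Fin K => ν (A ∩ retU T A p.1))]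
          rfl
      _ = ∑' (q : ℕ) (_r : Fin K), ν (A ∩ retU T A q) :=
          ENNReal.tsum_prod (f := fun q (_ : Fin K) => ν (A ∩ retU T A q))
      _ = ∑' q : ℕ, (K : ℝ≥0∞) * ν (A ∩ retU T A q) := by
          refine tsum_congr fun q => ?_
          rw [tsum_fintype]
          simp [Finset.sum_const, nsmul_eq_mul]
      _ = (K : ℝ≥0∞) * ∑' q, ν (A ∩ retU T A q) := ENNReal.tsum_mul_left
      _ ≤ (K : ℝ≥0∞) * 1 := mul_le_mul_right (kac_tsum hT.toMeasurePreserving hA) _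
    exact ne_top_of_le_ne_top (by simp) hle
  have hA0 : ν A ≠ 0 := by
    intro h
    rw [h] at hνA
    simp at hνA
  filter_upwards [ae_eventually_notMem hsum, returns_ae hT hA hA0] with x hx1 hx2
  obtain ⟨N₁, hN₁⟩ := Filter.eventually_atTop.mp hx1
  set N : ℕ := max N₁ K with hNdef
  have key : ∀ m, N ≤ m → T^[m] x ∈ A → ∃ j : ℕ, 1 ≤ j ∧ (j:ℝ) < ε * m ∧ T^[m + j] x ∈ A := by
    intro m hm hmA
    have hxB : x ∉ B m := hN₁ m (le_trans (le_max_left _ _) hm)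
    have hU : T^[m] x ∉ retU T A (g m) := fun hU => hxB ⟨hmA, hU⟩
    rw [mem_retU] at hU
    push_neg at hU
    obtain ⟨j, hj1, hj2, hj3⟩ := hU
    have hKm : K ≤ m := le_trans (le_max_right _ _) hm
    have hgm : 1 ≤ g m := le_trans ((Nat.one_le_div_iff (by omega)).mpr hKm) (hgdiv m)
    have hfl2 : 2 ≤ ⌊ε * (m:ℝ)⌋₊ := by
      have : g m = ⌊ε * (m:ℝ)⌋₊ - 1 := rfl
      omega
    refine ⟨j, hj1, ?_, ?_⟩
    · have hfle : (⌊ε * (m:ℝ)⌋₊ : ℝ) ≤ ε * m := Nat.floor_le (by positivity)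
      have hgm2 : g m = ⌊ε * (m:ℝ)⌋₊ - 1 := rfl
      have h3 : j + 1 ≤ ⌊ε * (m:ℝ)⌋₊ := by omega
      have h4 : ((j:ℝ) + 1) ≤ (⌊ε * (m:ℝ)⌋₊ : ℝ) := by exact_mod_cast h3
      linarith
    · rw [add_comm, Function.iterate_add_apply]
      exact hj3
  obtain ⟨n₀, hn₀N, hn₀A⟩ := hx2 (N + 1)
  choose j hj1 hj2 hj3 using key
  let f : ℕ → {p : ℕ // N + 1 ≤ p ∧ T^[p] x ∈ A} :=
    fun l => Nat.rec ⟨n₀, hn₀N, hn₀A⟩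
      (fun _ ih => ⟨ih.1 + j ih.1 (Nat.le_of_succ_le ih.2.1) ih.2.2,
        le_trans ih.2.1 (Nat.le_add_right _ _), hj3 _ _ _⟩) l
  refine ⟨fun l => (f l).1, ?_, ?_, fun l => (f l).2.2, ?_⟩
  · exact lt_of_lt_of_le (Nat.succ_pos N) ((f 0).2.1)
  · apply strictMono_nat_of_lt_succ
    intro l
    have h1 : 1 ≤ j (f l).1 (Nat.le_of_succ_le (f l).2.1) (f l).2.2 := hj1 _ _ _
    have he : (f (l+1)).1 = (f l).1 + j (f l).1 (Nat.le_of_succ_le (f l).2.1) (f l).2.2 := rfl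
    omega
  · intro l
    have h2 := hj2 (f l).1 (Nat.le_of_succ_le (f l).2.1) (f l).2.2
    have he : (f (l+1)).1 = (f l).1 + j (f l).1 (Nat.le_of_succ_le (f l).2.1) (f l).2.2 := rfl
    show (((f (l+1)).1 : ℕ) : ℝ) - (((f l).1 : ℕ) : ℝ) < ε * (((f l).1 : ℕ) : ℝ)
    rw [he]
    push_cast
    linarith

end Main
end

section
/- Let f : X → X be a continuous map of a compact metric space which is topologically exact (for every open U with U ∩ X ≠ ∅ there is n with f^n(U) ⊇ X), let J : X → ℝ≥0 be continuous, and let μ be a Borel probability measure on X that is J-conformal: μ(f(A)) = ∫_A J dμ for every Borel set A on which f is injective. If there is a point x not in the support of μ, a ball B around x with μ(B) = 0 and J > 0 on B ∪ f(B) ∪ ⋯, and f^n is a countable-to-one map on each iterate image, then μ(f^n(B)) = 0 for all n; consequently, if f is topologically exact and B can be chosen avoiding the degeneracy set {J = 0}'s forward orbit, the support of μ is all of X. -/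
open MeasureTheory
open scoped ENNReal NNReal

theorem notCountableNatBool : ¬ Countable (ℕ → Bool) := by
  intro h
  have h1 : Cardinal.mk (ℕ → Bool) ≤ Cardinal.aleph0 := Cardinal.mk_le_aleph0
  have h2 : Cardinal.mk (ℕ → Bool) = 2 ^ Cardinal.aleph0 := by
    rw [← Cardinal.mk_nat, ← Cardinal.mk_bool, Cardinal.power_def]
  rw [h2, Cardinal.two_power_aleph0] at h1
  exact Cardinal.aleph0_lt_continuum.not_ge h1

lemma compact_inter_open_sigma {α : Type*} [MetricSpace α] {K U : Set α}
    (hK : IsCompact K) (hU : IsOpen U) :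
    ∃ C : ℕ → Set α, (∀ n, IsCompact (C n)) ∧ K ∩ U = ⋃ n, C n := by
  set Cl : ℕ → Set α := fun n => {x | ∀ y ∉ U, (n + 1 : ℝ)⁻¹ ≤ dist x y} with hCl
  have hClosed : ∀ n, IsClosed (Cl n) := by
    intro n
    have : Cl n = ⋂ y ∈ Uᶜ, {x | (n + 1 : ℝ)⁻¹ ≤ dist x y} := by
      ext x; simp [hCl, Set.mem_iInter]
    rw [this]
    exact isClosed_biInter fun y _ =>
      isClosed_le continuous_const (continuous_id.dist continuous_const)
  refine ⟨fun n => K ∩ Cl n, fun n => hK.inter_right (hClosed n), ?_⟩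
  ext x
  simp only [Set.mem_inter_iff, Set.mem_iUnion]
  constructor
  · rintro ⟨hxK, hxU⟩
    obtain ⟨ε, hε, hball⟩ := Metric.isOpen_iff.mp hU x hxU
    obtain ⟨n, hn⟩ := exists_nat_one_div_lt hε
    refine ⟨n, hxK, fun y hy => ?_⟩
    have : ε ≤ dist x y := by
      by_contra hlt
      push_neg at hlt
      exact hy (hball (by rw [Metric.mem_ball, dist_comm]; exact hlt))
    calc (n + 1 : ℝ)⁻¹ = 1 / (n + 1) := by rw [one_div]
      _ ≤ ε := le_of_lt hn
      _ ≤ dist x y := this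
  · rintro ⟨n, hxK, hx⟩
    refine ⟨hxK, by_contra fun hxU => ?_⟩
    have := hx x hxU
    rw [dist_self] at this
    have h0 : (0:ℝ) < (n+1:ℝ)⁻¹ := by positivity
    linarith

lemma image_null_of_compact_null {X : Type*} [MetricSpace X] [CompactSpace X]
    [MeasurableSpace X] [BorelSpace X]
    (f : X → X) (hf : Continuous f) (J : X → ℝ≥0) (μ : Measure X)
    (hconf : ∀ A : Set X, MeasurableSet A → Set.InjOn f A →
      μ (f '' A) = ∫⁻ x in A, (J x : ℝ≥0∞) ∂μ)
    (hfib : ∀ y : X, (f ⁻¹' {y}).Countable)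
    {K : Set X} (hK : IsCompact K) (hμK : μ K = 0) : μ (f '' K) = 0 := by
  classical
  set 𝒱 := TopologicalSpace.countableBasis X with h𝒱
  have hbasis := TopologicalSpace.isBasis_countableBasis X
  have hcount𝒱 : 𝒱.Countable := TopologicalSpace.countable_countableBasis X
  set D : Set X → Set X := fun V =>
    {x | x ∈ K ∩ V ∧ ∃ x', x' ∈ K ∩ V ∧ x' ≠ x ∧ f x' = f x} with hD
  set E : Set X → Set X := fun V => (K ∩ V) \ D V with hE
  -- measurability
  have hmeasE : ∀ V ∈ 𝒱, MeasurableSet (E V) := by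
    intro V hV
    have hVopen : IsOpen V := TopologicalSpace.isOpen_of_mem_countableBasis hV
    obtain ⟨C, hCc, hCeq⟩ := compact_inter_open_sigma hK hVopen
    have hZ : IsClosed {p : X × X | f p.1 = f p.2} :=
      isClosed_eq (hf.comp continuous_fst) (hf.comp continuous_snd)
    have hU' : IsOpen {p : X × X | p.1 ≠ p.2} :=
      isOpen_ne_fun continuous_fst continuous_snd
    have hQ : ∀ n m : ℕ, IsCompact ((C n ×ˢ C m) ∩ {p : X × X | f p.1 = f p.2}) :=
      fun n m => ((hCc n).prod (hCc m)).inter_right hZ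
    have hsig : ∀ n m : ℕ, ∃ G : ℕ → Set (X × X), (∀ j, IsCompact (G j)) ∧
        ((C n ×ˢ C m) ∩ {p : X × X | f p.1 = f p.2}) ∩ {p : X × X | p.1 ≠ p.2} = ⋃ j, G j :=
      fun n m => compact_inter_open_sigma (hQ n m) hU'
    choose G hGc hGeq using hsig
    have hDeq : D V = ⋃ n, ⋃ m, ⋃ j, Prod.fst '' (G n m j) := by
      ext x
      simp only [hD, Set.mem_setOf_eq, Set.mem_iUnion, Set.mem_image]
      constructor
      · rintro ⟨hx, x', hx', hne, hfeq⟩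
        have h1 : x ∈ ⋃ n, C n := hCeq ▸ hx
        have h2 : x' ∈ ⋃ n, C n := hCeq ▸ hx'
        obtain ⟨n, hn⟩ := Set.mem_iUnion.mp h1
        obtain ⟨m, hm⟩ := Set.mem_iUnion.mp h2
        have hp : ((x, x') : X × X) ∈
            ((C n ×ˢ C m) ∩ {p : X × X | f p.1 = f p.2}) ∩ {p : X × X | p.1 ≠ p.2} :=
          ⟨⟨⟨hn, hm⟩, hfeq.symm⟩, fun h => hne (h.symm)⟩
        rw [hGeq n m] at hp
        obtain ⟨j, hj⟩ := Set.mem_iUnion.mp hp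
        exact ⟨n, m, j, (x, x'), hj, rfl⟩
      · rintro ⟨n, m, j, p, hp, rfl⟩
        have hp' : p ∈ ((C n ×ˢ C m) ∩ {p : X × X | f p.1 = f p.2}) ∩ {p : X × X | p.1 ≠ p.2} :=
          (hGeq n m) ▸ Set.mem_iUnion.mpr ⟨j, hp⟩
        obtain ⟨⟨⟨hp1, hp2⟩, hfeq⟩, hne⟩ := hp'
        have h1 : p.1 ∈ K ∩ V := hCeq ▸ Set.mem_iUnion.mpr ⟨n, hp1⟩
        have h2 : p.2 ∈ K ∩ V := hCeq ▸ Set.mem_iUnion.mpr ⟨m, hp2⟩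
        exact ⟨h1, p.2, h2, fun h => hne h.symm, hfeq.symm⟩
    have hmeasD : MeasurableSet (D V) := by
      rw [hDeq]
      exact MeasurableSet.iUnion fun n => MeasurableSet.iUnion fun m =>
        MeasurableSet.iUnion fun j =>
          (((hGc n m j).image continuous_fst).isClosed).measurableSet
    exact (hK.isClosed.measurableSet.inter hVopen.measurableSet).diff hmeasD
  -- injectivity
  have hinjE : ∀ V : Set X, Set.InjOn f (E V) := by
    intro V x hx x' hx' hfeq
    by_contra hne
    exact hx.2 ⟨hx.1, x', hx'.1, fun h => hne h.symm, hfeq.symm⟩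
  -- each piece null
  have hnullE : ∀ V ∈ 𝒱, μ (f '' E V) = 0 := by
    intro V hV
    rw [hconf _ (hmeasE V hV) (hinjE V)]
    exact setLIntegral_measure_zero _ _
      (measure_mono_null (fun x hx => hx.1.1) hμK)
  -- coverage
  have hcover : f '' K ⊆ ⋃ V ∈ 𝒱, f '' (E V) := by
    rintro y ⟨x₀, hx₀, rfl⟩
    set F := K ∩ f ⁻¹' {f x₀} with hF
    have hFclosed : IsClosed F := hK.isClosed.inter (IsClosed.preimage hf isClosed_singleton)
    have hFne : F.Nonempty := ⟨x₀, hx₀, rfl⟩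
    have hFcount : F.Countable := (hfib (f x₀)).mono Set.inter_subset_right
    have hiso : ∃ x ∈ F, ∃ V ∈ 𝒱, x ∈ V ∧ F ∩ V ⊆ {x} := by
      by_contra hcon
      push_neg at hcon
      have hpre : Preperfect F := by
        rw [preperfect_iff_nhds]
        intro x hx U hU
        obtain ⟨V, hV𝒱, hxV, hVU⟩ := hbasis.mem_nhds_iff.mp hU
        obtain ⟨z, hz, hzx⟩ := Set.not_subset.mp (hcon x hx V hV𝒱 hxV)
        exact ⟨z, ⟨hVU hz.2, hz.1⟩, hzx⟩
      have hperf : Perfect F := ⟨hFclosed, hpre⟩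
      obtain ⟨g, hgrange, _, hginj⟩ := hperf.exists_nat_bool_injection hFne
      have : (Set.range g).Countable := hFcount.mono hgrange
      exact notCountableNatBool ((Equiv.ofInjective g hginj).countable_iff.mpr this.to_subtype)
    obtain ⟨x, hxF, V, hV𝒱, hxV, huniq⟩ := hiso
    refine Set.mem_biUnion hV𝒱 ⟨x, ⟨⟨hxF.1, hxV⟩, ?_⟩, hxF.2⟩
    rintro ⟨-, x', hx', hne, hfeq⟩
    have : x' ∈ F ∩ V := ⟨⟨hx'.1, by rw [Set.mem_preimage, Set.mem_singleton_iff, hfeq]; exact hxF.2⟩, hx'.2⟩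
    exact hne (huniq this)
  exact measure_mono_null hcover ((measure_biUnion_null_iff hcount𝒱).mpr hnullE)

theorem stmt_5 {X : Type*} [MetricSpace X] [CompactSpace X]
    [MeasurableSpace X] [BorelSpace X]
    (f : X → X) (hf : Continuous f)
    (hexact : ∀ U : Set X, IsOpen U → U.Nonempty → ∃ n : ℕ, Set.univ ⊆ f^[n] '' U)
    (J : X → ℝ≥0) (hJ : Continuous J)
    (μ : Measure X) [IsProbabilityMeasure μ]
    (hconf : ∀ A : Set X, MeasurableSet A → Set.InjOn f A →
      μ (f '' A) = ∫⁻ x in A, (J x : ℝ≥0∞) ∂μ)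
    (hfib : ∀ y : X, (f ⁻¹' {y}).Countable)
    (B : Set X) (hB : IsOpen B) (hμB : μ B = 0)
    (hJpos : ∀ n : ℕ, ∀ y ∈ f^[n] '' B, 0 < J y) :
    (∀ n : ℕ, μ (f^[n] '' B) = 0) ∧
    (B.Nonempty → ∀ U : Set X, IsOpen U → U.Nonempty → 0 < μ U) := by
  have key : ∀ n : ℕ, (∃ C : ℕ → Set X, (∀ i, IsCompact (C i)) ∧ f^[n] '' B = ⋃ i, C i)
      ∧ μ (f^[n] '' B) = 0 := by
    intro n
    induction n with
    | zero =>
      obtain ⟨C, hCc, hCeq⟩ := compact_inter_open_sigma isCompact_univ hB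
      rw [Set.univ_inter] at hCeq
      simp only [Function.iterate_zero, Set.image_id]
      exact ⟨⟨C, hCc, hCeq⟩, hμB⟩
    | succ n ih =>
      obtain ⟨⟨C, hCc, hCeq⟩, hnull⟩ := ih
      have himg : f^[n + 1] '' B = f '' (f^[n] '' B) := by
        rw [Function.iterate_succ', Set.image_comp]
      have hCnull : ∀ i, μ (C i) = 0 :=
        fun i => measure_mono_null (hCeq ▸ Set.subset_iUnion C i) hnull
      have hnull' : μ (f^[n + 1] '' B) = 0 := by
        rw [himg, hCeq, Set.image_iUnion]
        exact measure_iUnion_null fun i =>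
          image_null_of_compact_null f hf J μ hconf hfib (hCc i) (hCnull i)
      refine ⟨⟨fun i => f '' C i, fun i => (hCc i).image hf, ?_⟩, hnull'⟩
      rw [himg, hCeq, Set.image_iUnion]
  refine ⟨fun n => (key n).2, fun hBne U hU hUne => ?_⟩
  exfalso
  obtain ⟨n, hsub⟩ := hexact B hB hBne
  have h0 : μ (Set.univ : Set X) = 0 := measure_mono_null hsub (key n).2
  rw [measure_univ] at h0
  exact one_ne_zero h0
end
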